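/- In the mixed-measure setting, let f_c : C → ℝ be measurable with f_c > 0 and log f_c λ-integrable, and define the continuous embedding ι_c(f_c) : I → ℝ by ι_c(f_c)(t) = f_c(t) for t ∈ C and ι_c(f_c)(t) = exp(S_λ(f_c)) for t ∈ D, where S_λ(f_c) = (1/λ(I)) ∫_C log f_c dλ. Then (1/μ(I)) ∫_I log ι_c(f_c) dμ = S_λ(f_c), and consequently the centered log-ratio transform with respect to μ satisfies clr_μ[ι_c(f_c)](t) = log f_c(t) − S_λ(f_c) for t ∈ C and clr_μ[ι_c(f_c)](t) = 0 for t ∈ D; that is, the clr transform commutes with the continuous embedding. -/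

import Mathlib

open MeasureTheory
open scoped Classical

/-- The mixed reference measure `μ = Σ_d w_d δ_{t_d} + λ`, where `λ` is Lebesgue measure
restricted to `I`. -/
noncomputable def mixedMeasure (I : Set ℝ) (n : ℕ) (t : Fin n → ℝ) (w : Fin n → ℝ) :
    Measure ℝ :=
  (∑ d, ENNReal.ofReal (w d) • Measure.dirac (t d)) + volume.restrict I

private lemma integrable_dirac_meas {f : ℝ → ℝ} (hf : Measurable f) (a : ℝ) :
    Integrable f (Measure.dirac a) := by
  refine ⟨hf.aestronglyMeasurable, ?_⟩
  show (∫⁻ x, ‖f x‖₊ ∂Measure.dirac a) < ⊤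
  rw [lintegral_dirac' a (by measurability)]
  exact ENNReal.coe_lt_top

private lemma restrict_finset_sum' {ι : Type*} (s : Finset ι) (μ : ι → Measure ℝ)
    (u : Set ℝ) : (∑ i ∈ s, μ i).restrict u = ∑ i ∈ s, (μ i).restrict u := by
  classical
  induction s using Finset.induction_on with
  | empty => simp
  | insert _ _ h ih => rw [Finset.sum_insert h, Finset.sum_insert h, Measure.restrict_add, ih]

theorem clr_commutes_with_continuous_embedding
    (I : Set ℝ) (hImeas : MeasurableSet I) (hIconn : I.OrdConnected)
    (hI0 : 0 < volume I) (hIfin : volume I < ⊤)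
    (n : ℕ) (t : Fin n → ℝ) (htinj : Function.Injective t) (htI : ∀ d, t d ∈ I)
    (w : Fin n → ℝ) (hw : ∀ d, 0 < w d)
    (fc : ℝ → ℝ) (hfc : Measurable fc)
    (hfcpos : ∀ x ∈ I \ Set.range t, 0 < fc x)
    (hfclog : IntegrableOn (fun x => Real.log (fc x)) (I \ Set.range t) (volume.restrict I))
    (Slam : ℝ)
    (hSlam : Slam = (volume I).toReal⁻¹ *
      ∫ x in I \ Set.range t, Real.log (fc x) ∂(volume.restrict I))
    (g : ℝ → ℝ) (hg : g = fun x => if x ∈ Set.range t then Real.exp Slam else fc x) :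
    ((mixedMeasure I n t w) I).toReal⁻¹ *
        (∫ x in I, Real.log (g x) ∂(mixedMeasure I n t w)) = Slam ∧
      (∀ x ∈ I \ Set.range t,
        Real.log (g x) - ((mixedMeasure I n t w) I).toReal⁻¹ *
            (∫ y in I, Real.log (g y) ∂(mixedMeasure I n t w)) =
          Real.log (fc x) - Slam) ∧
      (∀ d : Fin n,
        Real.log (g (t d)) - ((mixedMeasure I n t w) I).toReal⁻¹ *
            (∫ y in I, Real.log (g y) ∂(mixedMeasure I n t w)) = 0) := by
  have htmeas : MeasurableSet (Set.range t) := (Set.finite_range t).measurableSet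
  have htnull : volume (Set.range t) = 0 := (Set.finite_range t).measure_zero _
  have hgmeas : Measurable g := by
    rw [hg]; exact Measurable.ite htmeas measurable_const hfc
  have hlogg : Measurable fun x => Real.log (g x) := hgmeas.log
  -- restrict identities
  have hresub : volume.restrict I = volume.restrict (I \ Set.range t) :=
    (Measure.restrict_congr_set (diff_ae_eq_self.2
      (measure_mono_null Set.inter_subset_right htnull)).symm)
  have hresI : (volume.restrict I).restrict (I \ Set.range t)
      = volume.restrict (I \ Set.range t) := by
    rw [Measure.restrict_restrict (hImeas.diff htmeas),
      Set.inter_eq_self_of_subset_left Set.diff_subset]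
  -- the dirac part restricted to I is itself
  have hνres : (∑ d, ENNReal.ofReal (w d) • Measure.dirac (t d)).restrict I
      = ∑ d, ENNReal.ofReal (w d) • Measure.dirac (t d) := by
    rw [restrict_finset_sum']
    refine Finset.sum_congr rfl fun d _ => ?_
    rw [Measure.restrict_smul, MeasureTheory.restrict_dirac' hImeas, if_pos (htI d)]
  have hμres : (mixedMeasure I n t w).restrict I
      = (∑ d, ENNReal.ofReal (w d) • Measure.dirac (t d)) + volume.restrict I := by
    rw [mixedMeasure, Measure.restrict_add, hνres, Measure.restrict_restrict hImeas,
      Set.inter_self]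
  -- g = fc a.e. on (volume.restrict I)
  have h0 : (volume.restrict I) (Set.range t) = 0 := by
    rw [Measure.restrict_apply htmeas]
    exact measure_mono_null Set.inter_subset_left htnull
  have haefg : (fun x => Real.log (g x)) =ᵐ[volume.restrict I] fun x => Real.log (fc x) := by
    rw [Filter.EventuallyEq, ae_iff]
    refine measure_mono_null (fun x hx => ?_) h0
    by_contra hxr
    exact hx (by rw [hg]; simp [hxr])
  -- integrability of log g wrt volume.restrict I
  have hintL : Integrable (fun x => Real.log (g x)) (volume.restrict I) := by
    refine (Integrable.congr ?_ haefg.symm)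
    have := hfclog
    rw [IntegrableOn, hresI] at this
    rwa [hresub]
  -- value of the Lebesgue part
  have hvol0 : (volume I).toReal ≠ 0 := by
    simp [ENNReal.toReal_eq_zero_iff, hI0.ne', hIfin.ne]
  have hLeb : ∫ x, Real.log (g x) ∂(volume.restrict I) = (volume I).toReal * Slam := by
    rw [integral_congr_ae haefg, hresub, hSlam]
    rw [← hresI]
    field_simp
  -- dirac part integrability and value
  have hintD : ∀ d : Fin n, Integrable (fun x => Real.log (g x))
      (ENNReal.ofReal (w d) • Measure.dirac (t d)) := fun d =>
    (integrable_dirac_meas hlogg (t d)).smul_measure ENNReal.ofReal_ne_top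
  have hgd : ∀ d : Fin n, Real.log (g (t d)) = Slam := by
    intro d
    rw [hg]; simp [Set.mem_range_self d, Real.log_exp]
  have hDir : ∀ d : Fin n, ∫ x, Real.log (g x) ∂(ENNReal.ofReal (w d) • Measure.dirac (t d))
      = w d * Slam := by
    intro d
    rw [integral_smul_measure, integral_dirac' _ _ hlogg.stronglyMeasurable,
      ENNReal.toReal_ofReal (hw d).le, hgd d, smul_eq_mul]
  -- total integral
  have hInt : ∫ x in I, Real.log (g x) ∂(mixedMeasure I n t w)
      = ((∑ d, w d) + (volume I).toReal) * Slam := by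
    rw [show (∫ x in I, Real.log (g x) ∂(mixedMeasure I n t w))
        = ∫ x, Real.log (g x) ∂((mixedMeasure I n t w).restrict I) from rfl, hμres,
      integral_add_measure (integrable_finset_sum_measure.2 fun d _ => hintD d) hintL,
      integral_finset_sum_measure (fun d _ => hintD d)]
    simp_rw [hDir, hLeb, ← Finset.sum_mul, add_mul]
  -- total mass
  have hmass : ((mixedMeasure I n t w) I).toReal = (∑ d, w d) + (volume I).toReal := by
    have : (mixedMeasure I n t w) I
        = (∑ d, ENNReal.ofReal (w d)) + volume I := by
      rw [mixedMeasure, Measure.add_apply, Measure.restrict_apply hImeas, Set.inter_self]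
      congr 1
      rw [Measure.finset_sum_apply]
      refine Finset.sum_congr rfl fun d _ => ?_
      simp [Measure.dirac_apply' _ hImeas, Set.indicator_of_mem (htI d)]
    rw [this, ENNReal.toReal_add (by simp [ENNReal.sum_eq_top]) hIfin.ne,
      ENNReal.toReal_sum (fun d _ => ENNReal.ofReal_ne_top)]
    congr 1
    exact Finset.sum_congr rfl fun d _ => ENNReal.toReal_ofReal (hw d).le
  have hmass0 : ((mixedMeasure I n t w) I).toReal ≠ 0 := by
    rw [hmass]
    have h1 : 0 < (volume I).toReal := ENNReal.toReal_pos hI0.ne' hIfin.ne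
    have h2 : 0 ≤ ∑ d, w d := Finset.sum_nonneg fun d _ => (hw d).le
    linarith
  have hmain : ((mixedMeasure I n t w) I).toReal⁻¹ *
      (∫ x in I, Real.log (g x) ∂(mixedMeasure I n t w)) = Slam := by
    rw [hInt, hmass, ← mul_assoc, inv_mul_cancel₀ (by rw [hmass] at hmass0; exact hmass0),
      one_mul]
  refine ⟨hmain, fun x hx => ?_, fun d => ?_⟩
  · rw [hmain, hg]; simp [hx.2]
  · rw [hmain, hgd d, sub_self]
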